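/- For real $s < b$, $\displaystyle\int_s^b \frac{\ln(b-x)}{\sqrt{(b-x)(x-s)}}\,dx = \pi \ln\frac{b-s}{4}$. -/

import Mathlib

open Real MeasureTheory Set intervalIntegral

lemma aux_integrableOn_log_Ioc : IntegrableOn Real.log (Set.Ioc 0 1) := by
  have h : IntegrableOn (fun x : ℝ => -Real.log x) (Set.Ioc (0:ℝ) 1) := by
    apply integrableOn_deriv_of_nonneg (g := fun x => x - x * Real.log x)
    · exact (continuous_id.sub Real.continuous_mul_log).continuousOn
    · intro x hx
      have h1 := (Real.hasDerivAt_mul_log (ne_of_gt hx.1))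
      have h2 := (hasDerivAt_id x).sub h1
      convert h2 using 1
      · rfl
      · rfl
      · rfl
      ring
    · intro x hx
      simp only [neg_nonneg]
      exact Real.log_nonpos hx.1.le hx.2.le
  have h2 := h.neg
  exact h2.congr (Filter.Eventually.of_forall fun x => by simp)

lemma aux_integrableOn_log' : IntegrableOn Real.log (Set.Ioc 0 (Real.pi/2)) := by
  have h2 : IntegrableOn Real.log (Set.Ioc 1 (Real.pi/2)) := by
    have : ContinuousOn Real.log (Set.Icc 1 (Real.pi/2)) :=
      Real.continuousOn_log.mono (by intro x hx; simp; linarith [hx.1])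
    exact this.integrableOn_Icc.mono_set Set.Ioc_subset_Icc_self
  have := aux_integrableOn_log_Ioc.union h2
  apply this.mono_set
  intro x hx
  rcases le_or_gt x 1 with h | h
  · exact Or.inl ⟨hx.1, h⟩
  · exact Or.inr ⟨h, hx.2⟩

lemma aux_int_log_sin : IntervalIntegrable (fun x => Real.log (Real.sin x)) volume 0 (Real.pi/2) := by
  rw [intervalIntegrable_iff_integrableOn_Ioc_of_le (by positivity)]
  have hg : IntegrableOn (fun x : ℝ => |Real.log x| + Real.log 4) (Set.Ioc 0 (Real.pi/2)) :=
    aux_integrableOn_log'.abs.add (integrableOn_const (by simp [Real.pi_pos.le]))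
  apply MeasureTheory.Integrable.mono hg
  · exact (Real.measurable_log.comp Real.measurable_sin).aestronglyMeasurable
  · rw [ae_restrict_iff' measurableSet_Ioc]
    refine Filter.Eventually.of_forall fun x hx => ?_
    have hx0 : 0 < x := hx.1
    have hxpi : x < Real.pi := lt_of_le_of_lt hx.2 (by linarith [Real.pi_pos])
    have hs : 0 < Real.sin x := Real.sin_pos_of_pos_of_lt_pi hx0 hxpi
    have hub : Real.log (Real.sin x) ≤ Real.log x :=
      Real.log_le_log hs (Real.sin_le hx0.le)
    have hlb : Real.log (2/Real.pi) + Real.log x ≤ Real.log (Real.sin x) := by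
      rw [← Real.log_mul (by positivity) (ne_of_gt hx0)]
      exact Real.log_le_log (by positivity) (Real.mul_le_sin hx0.le hx.2)
    have hlog4 : -Real.log 4 ≤ Real.log (2/Real.pi) := by
      rw [Real.log_div (by norm_num) (ne_of_gt Real.pi_pos)]
      have h1 : Real.log Real.pi ≤ Real.log 4 :=
        Real.log_le_log Real.pi_pos (by linarith [Real.pi_le_four])
      have h2 : (0:ℝ) ≤ Real.log 2 := Real.log_nonneg (by norm_num)
      linarith
    have h2 : (0:ℝ) ≤ Real.log 4 := Real.log_nonneg (by norm_num)
    have habs : |Real.log (Real.sin x)| ≤ |Real.log x| + Real.log 4 := by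
      rw [abs_le]
      constructor
      · have := neg_abs_le (Real.log x)
        linarith
      · have := le_abs_self (Real.log x)
        linarith
    simp only [Real.norm_eq_abs]
    calc |Real.log (Real.sin x)| ≤ |Real.log x| + Real.log 4 := habs
      _ ≤ |(|Real.log x| + Real.log 4)| := le_abs_self _

lemma aux_int_log_cos : IntervalIntegrable (fun x => Real.log (Real.cos x)) volume 0 (Real.pi/2) := by
  have h := (aux_int_log_sin.comp_sub_left (Real.pi/2)).symm
  simp only [sub_zero, sub_self] at h
  have heq : (fun x => Real.log (Real.sin (Real.pi/2 - x))) = fun x => Real.log (Real.cos x) := by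
    funext x; rw [Real.sin_pi_div_two_sub]
  rwa [heq] at h

lemma aux_int_log_sin' : IntervalIntegrable (fun x => Real.log (Real.sin x)) volume (Real.pi/2) Real.pi := by
  have h := (aux_int_log_sin.comp_sub_left Real.pi).symm
  simp only [sub_zero] at h
  have heq : (fun x => Real.log (Real.sin (Real.pi - x))) = fun x => Real.log (Real.sin x) := by
    funext x; rw [Real.sin_pi_sub]
  rw [heq] at h
  rwa [show Real.pi - Real.pi/2 = Real.pi/2 by ring] at h

lemma aux_log_sin_integral :
    ∫ x in (0:ℝ)..(Real.pi/2), Real.log (Real.sin x) = -(Real.pi/2) * Real.log 2 := by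
  set I := ∫ x in (0:ℝ)..(Real.pi/2), Real.log (Real.sin x) with hI
  have hcos : ∫ x in (0:ℝ)..(Real.pi/2), Real.log (Real.cos x) = I := by
    have h := intervalIntegral.integral_comp_sub_left (a := 0) (b := Real.pi/2)
      (fun x => Real.log (Real.sin x)) (Real.pi/2)
    simp only [sub_zero, sub_self, Real.sin_pi_div_two_sub] at h
    exact h
  have hupper : ∫ x in (Real.pi/2)..Real.pi, Real.log (Real.sin x) = I := by
    have h := intervalIntegral.integral_comp_sub_left (a := 0) (b := Real.pi/2)
      (fun x => Real.log (Real.sin x)) Real.pi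
    simp only [sub_zero, Real.sin_pi_sub, show Real.pi - Real.pi/2 = Real.pi/2 by ring] at h
    exact h.symm
  have hdouble : ∫ x in (0:ℝ)..(Real.pi/2), Real.log (Real.sin (2*x)) = I := by
    have h := intervalIntegral.integral_comp_mul_left (a := 0) (b := Real.pi/2)
      (fun x => Real.log (Real.sin x)) (c := 2) two_ne_zero
    rw [h, mul_zero, show (2:ℝ) * (Real.pi/2) = Real.pi by ring,
      ← intervalIntegral.integral_add_adjacent_intervals (b := Real.pi/2) aux_int_log_sin aux_int_log_sin',
      hupper]
    rw [← hI]
    rw [smul_eq_mul]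
    ring
  have hae : ∀ᵐ x : ℝ ∂volume, x ∈ Set.uIoc (0:ℝ) (Real.pi/2) →
      Real.log (Real.sin (2*x)) = Real.log 2 + Real.log (Real.sin x) + Real.log (Real.cos x) := by
    have h0 : ∀ᵐ x : ℝ ∂volume, x ≠ Real.pi/2 := by
      rw [MeasureTheory.ae_iff]
      simp only [ne_eq, not_not]
      exact Real.volume_singleton
    filter_upwards [h0] with x hx hmem
    rw [Set.uIoc_of_le (by positivity)] at hmem
    have hx1 : 0 < x := hmem.1
    have hx2 : x < Real.pi/2 := lt_of_le_of_ne hmem.2 hx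
    have hs : 0 < Real.sin x := Real.sin_pos_of_pos_of_lt_pi hx1 (by linarith [Real.pi_pos])
    have hc : 0 < Real.cos x := Real.cos_pos_of_mem_Ioo ⟨by linarith, hx2⟩
    rw [Real.sin_two_mul, Real.log_mul (by positivity) (ne_of_gt hc),
      Real.log_mul (by norm_num) (ne_of_gt hs)]
  have hsplit := intervalIntegral.integral_congr_ae hae
  rw [hdouble] at hsplit
  rw [intervalIntegral.integral_add (intervalIntegrable_const.add aux_int_log_sin) aux_int_log_cos,
    intervalIntegral.integral_add intervalIntegrable_const aux_int_log_sin,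
    intervalIntegral.integral_const, hcos, ← hI] at hsplit
  have hpi := Real.pi_pos
  simp only [sub_zero, smul_eq_mul] at hsplit
  linarith

lemma aux_log_cos_integral :
    ∫ x in (0:ℝ)..(Real.pi/2), Real.log (Real.cos x) = -(Real.pi/2) * Real.log 2 := by
  have h := intervalIntegral.integral_comp_sub_left (a := 0) (b := Real.pi/2)
    (fun x => Real.log (Real.sin x)) (Real.pi/2)
  simp only [sub_zero, sub_self, Real.sin_pi_div_two_sub] at h
  rw [h, aux_log_sin_integral]

theorem stmt_16 (s b : ℝ) (hsb : s < b) :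
    ∫ x in s..b, Real.log (b - x) / Real.sqrt ((b - x) * (x - s)) =
      Real.pi * Real.log ((b - s) / 4) := by
  have hc : (0:ℝ) < b - s := by linarith
  set φ : ℝ → ℝ := fun θ => s + (b - s) * Real.sin θ ^ 2 with hφ
  have hderiv : ∀ θ ∈ Set.Ioo (0:ℝ) (Real.pi/2),
      HasDerivWithinAt φ ((b - s) * (2 * Real.sin θ * Real.cos θ)) (Set.Ioo (0:ℝ) (Real.pi/2)) θ := by
    intro θ _
    have h1 := ((Real.hasDerivAt_sin θ).pow 2).const_mul (b - s)
    have h2 := h1.const_add s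
    apply HasDerivAt.hasDerivWithinAt
    convert h2 using 1
    · rfl
    push_cast
    ring
  have hinj : Set.InjOn φ (Set.Ioo (0:ℝ) (Real.pi/2)) := by
    intro θ1 h1 θ2 h2 heq
    have hs1 : 0 < Real.sin θ1 := Real.sin_pos_of_pos_of_lt_pi h1.1 (by linarith [Real.pi_pos, h1.2])
    have hs2 : 0 < Real.sin θ2 := Real.sin_pos_of_pos_of_lt_pi h2.1 (by linarith [Real.pi_pos, h2.2])
    have hsq : Real.sin θ1 ^ 2 = Real.sin θ2 ^ 2 := by
      have := heq
      simp only [hφ] at this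
      have h4 : (b - s) * Real.sin θ1 ^ 2 = (b - s) * Real.sin θ2 ^ 2 := by linarith
      exact mul_left_cancel₀ (ne_of_gt hc) h4
    have hsin : Real.sin θ1 = Real.sin θ2 := by
      rcases sq_eq_sq_iff_eq_or_eq_neg.1 hsq with h | h
      · exact h
      · linarith
    exact Real.injOn_sin ⟨by linarith [h1.1, Real.pi_pos], h1.2.le⟩
      ⟨by linarith [h2.1, Real.pi_pos], h2.2.le⟩ hsin
  have himg : φ '' Set.Ioo (0:ℝ) (Real.pi/2) = Set.Ioo s b := by
    ext x
    constructor
    · rintro ⟨θ, hθ, rfl⟩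
      have hs1 : 0 < Real.sin θ := Real.sin_pos_of_pos_of_lt_pi hθ.1 (by linarith [Real.pi_pos, hθ.2])
      have hs2 : Real.sin θ < 1 := by
        have := Real.strictMonoOn_sin (a := θ) (b := Real.pi/2)
          ⟨by linarith [hθ.1, Real.pi_pos], hθ.2.le⟩
          ⟨by linarith [Real.pi_pos], le_refl _⟩ hθ.2
        rwa [Real.sin_pi_div_two] at this
      have hq1 : 0 < Real.sin θ ^ 2 := by positivity
      have hq2 : Real.sin θ ^ 2 < 1 := by nlinarith
      constructor
      · simp only [hφ]; nlinarith
      · simp only [hφ]; nlinarith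
    · intro hx
      set u := (x - s) / (b - s) with hu
      have hu1 : 0 < u := by apply div_pos <;> linarith [hx.1, hx.2]
      have hu2 : u < 1 := by rw [hu, div_lt_one hc]; linarith [hx.2]
      refine ⟨Real.arcsin (Real.sqrt u), ⟨?_, ?_⟩, ?_⟩
      · exact Real.arcsin_pos.2 (Real.sqrt_pos.2 hu1)
      · exact Real.arcsin_lt_pi_div_two.2 (by
          rw [show (1:ℝ) = Real.sqrt 1 by simp]
          exact Real.sqrt_lt_sqrt hu1.le hu2)
      · simp only [hφ]
        rw [Real.sin_arcsin (by linarith [Real.sqrt_nonneg u]) (by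
            rw [show (1:ℝ) = Real.sqrt 1 by simp]
            exact Real.sqrt_le_sqrt hu2.le),
          Real.sq_sqrt hu1.le, hu]
        field_simp
        ring
  rw [intervalIntegral.integral_of_le hsb.le, MeasureTheory.integral_Ioc_eq_integral_Ioo, ← himg,
    MeasureTheory.integral_image_eq_integral_abs_deriv_smul measurableSet_Ioo hderiv hinj]
  have hcongr : ∀ θ ∈ Set.Ioo (0:ℝ) (Real.pi/2),
      |(b - s) * (2 * Real.sin θ * Real.cos θ)| •
        (Real.log (b - φ θ) / Real.sqrt ((b - φ θ) * (φ θ - s)))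
      = 2 * Real.log (b - s) + 4 * Real.log (Real.cos θ) := by
    intro θ hθ
    have hs1 : 0 < Real.sin θ := Real.sin_pos_of_pos_of_lt_pi hθ.1 (by linarith [Real.pi_pos, hθ.2])
    have hc1 : 0 < Real.cos θ := Real.cos_pos_of_mem_Ioo ⟨by linarith [hθ.1, Real.pi_pos], hθ.2⟩
    have hb : b - φ θ = (b - s) * Real.cos θ ^ 2 := by
      simp only [hφ]
      have := Real.sin_sq_add_cos_sq θ
      nlinarith
    have hsx : φ θ - s = (b - s) * Real.sin θ ^ 2 := by simp only [hφ]; ring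
    have hsqrt : Real.sqrt ((b - φ θ) * (φ θ - s)) = (b - s) * Real.sin θ * Real.cos θ := by
      rw [hb, hsx, show (b - s) * Real.cos θ ^ 2 * ((b - s) * Real.sin θ ^ 2)
        = ((b - s) * Real.sin θ * Real.cos θ) ^ 2 by ring]
      exact Real.sqrt_sq (by positivity)
    rw [hsqrt, hb, abs_of_pos (by positivity), smul_eq_mul,
      Real.log_mul (ne_of_gt hc) (by positivity), Real.log_pow]
    field_simp
    ring
  rw [MeasureTheory.setIntegral_congr_fun measurableSet_Ioo hcongr,
    ← MeasureTheory.integral_Ioc_eq_integral_Ioo,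
    ← intervalIntegral.integral_of_le (by positivity : (0:ℝ) ≤ Real.pi/2),
    intervalIntegral.integral_add intervalIntegrable_const (aux_int_log_cos.const_mul 4),
    intervalIntegral.integral_const, intervalIntegral.integral_const_mul, aux_log_cos_integral]
  have hlog : Real.log ((b - s) / 4) = Real.log (b - s) - 2 * Real.log 2 := by
    rw [Real.log_div (ne_of_gt hc) (by norm_num), show (4:ℝ) = 2^2 by norm_num, Real.log_pow]
    push_cast; ring
  rw [hlog]
  simp only [sub_zero, smul_eq_mul]
  ring
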